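/- If M is a graded module over an exterior algebra E and ℓ ∈ E_1 is a regular element on M, then the Hilbert series of M is divisible by (1+t); more precisely HS_M(t) = (1+t) · HS_{M/ℓM}(t). -/

import Mathlib

open ExteriorAlgebra

section Finiteness

variable (K : Type*) [Field K] (n : ℕ)

private noncomputable def Egen (i : Fin n) : ExteriorAlgebra K (Fin n → K) :=
  ExteriorAlgebra.ι K (Pi.single i 1)

private noncomputable def Espan : Submodule K (ExteriorAlgebra K (Fin n → K)) :=
  Submodule.span K
    {x | ∃ L : List (Fin n), L.Pairwise (· < ·) ∧ x = (L.map (Egen K n)).prod}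

private lemma sorted_prod_mem {L : List (Fin n)} (hL : L.Pairwise (· < ·)) :
    (L.map (Egen K n)).prod ∈ Espan K n :=
  Submodule.subset_span ⟨L, hL, rfl⟩

private lemma egen_mul_sorted_mem :
    ∀ (i : Fin n) (L : List (Fin n)), L.Pairwise (· < ·) →
      Egen K n i * (L.map (Egen K n)).prod ∈ Espan K n := by
  suffices h : ∀ (N : ℕ) (i : Fin n), i.val < N → ∀ (L : List (Fin n)), L.Pairwise (· < ·) →
      Egen K n i * (L.map (Egen K n)).prod ∈ Espan K n by
    intro i L hL; exact h (i.val + 1) i (Nat.lt_succ_self _) L hL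
  intro N
  induction N with
  | zero => intro i hi; omega
  | succ N ih =>
    intro i hi L
    induction L with
    | nil =>
      intro _
      have : ([i] : List (Fin n)).Pairwise (· < ·) := List.pairwise_singleton _ i
      simpa using sorted_prod_mem K n this
    | cons j L' ihL =>
      intro hL
      have hj : ∀ b ∈ L', j < b := (List.pairwise_cons.mp hL).1
      have hL' : L'.Pairwise (· < ·) := (List.pairwise_cons.mp hL).2
      rcases lt_trichotomy i j with hij | rfl | hij
      · have hs : (i :: j :: L').Pairwise (· < ·) := by
          rw [List.pairwise_cons]
          refine ⟨?_, hL⟩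
          intro b hb
          rcases List.mem_cons.mp hb with rfl | hb
          · exact hij
          · exact lt_trans hij (hj b hb)
        have := sorted_prod_mem K n hs
        simpa [List.prod_cons] using this
      · rw [List.map_cons, List.prod_cons, ← mul_assoc]
        have h0 : Egen K n i * Egen K n i = 0 := ι_sq_zero _
        rw [h0, zero_mul]
        exact zero_mem _
      · have h1 : Egen K n i * (L'.map (Egen K n)).prod ∈ Espan K n := ihL hL'
        have h2 : ∀ x ∈ Espan K n, Egen K n j * x ∈ Espan K n := by
          intro x hx
          refine Submodule.span_induction ?_ ?_ ?_ ?_ hx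
          · rintro y ⟨L'', hs, rfl⟩
            exact ih j (lt_of_lt_of_le hij (Nat.lt_succ_iff.mp hi)) L'' hs
          · rw [mul_zero]; exact zero_mem _
          · intro a b _ _ ha hb; rw [mul_add]; exact add_mem ha hb
          · intro c a _ ha; rw [mul_smul_comm]; exact Submodule.smul_mem _ _ ha
        have hswap : Egen K n i * Egen K n j = -(Egen K n j * Egen K n i) := by
          rw [eq_neg_iff_add_eq_zero]
          exact ι_add_mul_swap (Pi.single i 1) (Pi.single j 1)
        have key : Egen K n i * ((j :: L').map (Egen K n)).prod
            = -(Egen K n j * (Egen K n i * (L'.map (Egen K n)).prod)) := by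
          rw [List.map_cons, List.prod_cons, ← mul_assoc, hswap, neg_mul, mul_assoc]
        rw [key]
        exact neg_mem (h2 _ h1)

private lemma egen_mul_mem (i : Fin n) : ∀ x ∈ Espan K n, Egen K n i * x ∈ Espan K n := by
  intro x hx
  refine Submodule.span_induction ?_ ?_ ?_ ?_ hx
  · rintro y ⟨L, hs, rfl⟩
    exact egen_mul_sorted_mem K n i L hs
  · rw [mul_zero]; exact zero_mem _
  · intro a b _ _ ha hb; rw [mul_add]; exact add_mem ha hb
  · intro c a _ ha; rw [mul_smul_comm]; exact Submodule.smul_mem _ _ ha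

private lemma listprod_mem (L : List (Fin n)) : (L.map (Egen K n)).prod ∈ Espan K n := by
  induction L with
  | nil => simpa using sorted_prod_mem K n (List.Pairwise.nil (R := (· < ·)))
  | cons i L ih =>
    rw [List.map_cons, List.prod_cons]
    exact egen_mul_mem K n i _ ih

private lemma mul_mem_Espan : ∀ x ∈ Espan K n, ∀ y ∈ Espan K n, x * y ∈ Espan K n := by
  have hList : ∀ (L : List (Fin n)), ∀ y ∈ Espan K n,
      (L.map (Egen K n)).prod * y ∈ Espan K n := by
    intro L
    induction L with
    | nil => intro y hy; simpa using hy
    | cons i L ih =>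
      intro y hy
      rw [List.map_cons, List.prod_cons, mul_assoc]
      exact egen_mul_mem K n i _ (ih y hy)
  intro x hx
  refine Submodule.span_induction ?_ ?_ ?_ ?_ hx
  · rintro a ⟨L, hs, rfl⟩; exact hList L
  · intro y _; rw [zero_mul]; exact zero_mem _
  · intro a b _ _ ha hb y hy; rw [add_mul]; exact add_mem (ha y hy) (hb y hy)
  · intro c a _ ha y hy; rw [smul_mul_assoc]; exact Submodule.smul_mem _ _ (ha y hy)

private lemma one_mem_Espan : (1 : ExteriorAlgebra K (Fin n → K)) ∈ Espan K n := by
  simpa using listprod_mem K n []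

private lemma iota_mem_Espan (v : Fin n → K) : ExteriorAlgebra.ι K v ∈ Espan K n := by
  have hv : (v : Fin n → K) = ∑ i, Pi.single i (v i) := (Finset.univ_sum_single v).symm
  rw [hv, map_sum]
  refine Submodule.sum_mem _ fun i _ => ?_
  have h1 : (Pi.single i (v i) : Fin n → K) = v i • (Pi.single i (1 : K) : Fin n → K) := by
    rw [← Pi.single_smul, smul_eq_mul, mul_one]
  rw [h1, map_smul]
  refine Submodule.smul_mem _ _ ?_
  have := listprod_mem K n [i]
  simpa [Egen] using this

private lemma Espan_eq_top : Espan K n = ⊤ := by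
  have key : ∀ x : ExteriorAlgebra K (Fin n → K), x ∈ Espan K n := by
    intro x
    induction x using ExteriorAlgebra.induction with
    | algebraMap r =>
      rw [Algebra.algebraMap_eq_smul_one]
      exact Submodule.smul_mem _ _ (one_mem_Espan K n)
    | ι v => exact iota_mem_Espan K n v
    | mul a b ha hb => exact mul_mem_Espan K n a ha b hb
    | add a b ha hb => exact add_mem ha hb
  rw [eq_top_iff]
  exact fun x _ => key x

private lemma finiteE : Module.Finite K (ExteriorAlgebra K (Fin n → K)) := by
  rw [Module.finite_def, ← Espan_eq_top K n]
  rw [Submodule.fg_def]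
  refine ⟨_, ?_, rfl⟩
  have hsub : {x | ∃ L : List (Fin n), L.Pairwise (· < ·) ∧ x = (L.map (Egen K n)).prod}
      ⊆ (fun L : List (Fin n) => (L.map (Egen K n)).prod) '' {L | L.length ≤ n} := by
    rintro x ⟨L, hL, rfl⟩
    refine ⟨L, ?_, rfl⟩
    have := hL.nodup.length_le_card
    simpa using this
  exact ((List.finite_length_le (Fin n) n).image _).subset hsub

/-- rank-nullity for the restriction of a map to a submodule -/
private lemma rank_split {K M M₂ : Type*} [Field K] [AddCommGroup M] [Module K M]
    [AddCommGroup M₂] [Module K M₂] (g : M →ₗ[K] M₂) (W : Submodule K M)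
    [FiniteDimensional K W] :
    Module.finrank K W
      = Module.finrank K (W.map g) + Module.finrank K ↥(LinearMap.ker g ⊓ W) := by
  have h := LinearMap.finrank_range_add_finrank_ker (g.comp W.subtype)
  rw [LinearMap.range_comp, Submodule.range_subtype, LinearMap.ker_comp] at h
  have e2 : Submodule.comap W.subtype (LinearMap.ker g)
      = Submodule.comap W.subtype (LinearMap.ker g ⊓ W) := by
    rw [Submodule.comap_inf, Submodule.comap_subtype_self, inf_top_eq]
  rw [e2, (Submodule.comapSubtypeEquivOfLe (inf_le_right :
    LinearMap.ker g ⊓ W ≤ W)).finrank_eq] at h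
  exact h.symm

end Finiteness

/-- Let `E` be the exterior algebra on `n` generators over a field `K`, `M` a finitely
generated graded `E`-module (with grading `ℳ` compatible with the action of `E₁`), and
`ℓ = ι v ∈ E₁` a regular element on `M`.  Then `HS_M(t) = (1+t) · HS_{M/ℓM}(t)`;
in particular `(1+t)` divides the Hilbert series of `M`. -/
theorem stmt11 (K : Type*) [Field K] (n : ℕ)
    (M : Type*) [AddCommGroup M] [Module K M]
    [Module (ExteriorAlgebra K (Fin n → K)) M]
    [IsScalarTower K (ExteriorAlgebra K (Fin n → K)) M]
    [SMulCommClass K (ExteriorAlgebra K (Fin n → K)) M]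
    [Module.Finite (ExteriorAlgebra K (Fin n → K)) M]
    (ℳ : ℕ → Submodule K M) [DirectSum.Decomposition ℳ]
    (hgraded : ∀ (w : Fin n → K) (i : ℕ), ∀ m ∈ ℳ i,
      (ExteriorAlgebra.ι K w : ExteriorAlgebra K (Fin n → K)) • m ∈ ℳ (i + 1))
    (v : Fin n → K)
    (hreg : {m : M | (ExteriorAlgebra.ι K v : ExteriorAlgebra K (Fin n → K)) • m = 0} =
      Set.range fun m : M =>
        (ExteriorAlgebra.ι K v : ExteriorAlgebra K (Fin n → K)) • m) :
    (PowerSeries.mk fun i => Module.finrank K (ℳ i)) =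
      (1 + PowerSeries.X) *
        PowerSeries.mk (fun i => Module.finrank K ((ℳ i).map (Submodule.mkQ
          (Submodule.span K (Set.range fun m : M =>
            (ExteriorAlgebra.ι K v : ExteriorAlgebra K (Fin n → K)) • m))))) := by
  haveI : Module.Finite K (ExteriorAlgebra K (Fin n → K)) := finiteE K n
  haveI : Module.Finite K M := Module.Finite.trans (ExteriorAlgebra K (Fin n → K)) M
  -- the multiplication-by-ℓ map, as a K-linear map
  set L : M →ₗ[K] M :=
    { toFun := fun m => (ExteriorAlgebra.ι K v : ExteriorAlgebra K (Fin n → K)) • m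
      map_add' := fun a b => smul_add _ a b
      map_smul' := fun k m => (smul_comm k
        (ExteriorAlgebra.ι K v : ExteriorAlgebra K (Fin n → K)) m).symm } with hLdef
  set N : Submodule K M := Submodule.span K (Set.range fun m : M =>
    (ExteriorAlgebra.ι K v : ExteriorAlgebra K (Fin n → K)) • m) with hNdef
  have hrange : N = LinearMap.range L := by
    rw [hNdef]
    have h1 : (Set.range fun m : M =>
        (ExteriorAlgebra.ι K v : ExteriorAlgebra K (Fin n → K)) • m)
        = ↑(LinearMap.range L) := by
      ext x
      simp [hLdef]
    rw [h1, Submodule.span_eq]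
  have hker : LinearMap.ker L = LinearMap.range L := by
    ext m
    simp only [LinearMap.mem_ker, LinearMap.mem_range]
    constructor
    · intro h
      have hm : m ∈ {m : M | (ExteriorAlgebra.ι K v :
          ExteriorAlgebra K (Fin n → K)) • m = 0} := h
      rw [hreg] at hm
      obtain ⟨y, hy⟩ := hm
      exact ⟨y, hy⟩
    · rintro ⟨y, rfl⟩
      have : L y ∈ Set.range fun m : M =>
          (ExteriorAlgebra.ι K v : ExteriorAlgebra K (Fin n → K)) • m := ⟨y, rfl⟩
      rw [← hreg] at this
      exact this
  -- the decomposition interacts with L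
  have hLmem : ∀ (j : ℕ), ∀ m ∈ ℳ j, L m ∈ ℳ (j + 1) := by
    intro j m hm
    exact hgraded v j m hm
  have hdec : ∀ (i : ℕ) (m : M),
      ((DirectSum.decompose ℳ (L m)) (i + 1) : M)
        = L ((DirectSum.decompose ℳ m) i : M) := by
    intro i
    refine DirectSum.Decomposition.inductionOn ℳ ?_ ?_ ?_
    · simp
    · intro j m
      have h1 : L (m : M) ∈ ℳ (j + 1) := hLmem j m m.2
      by_cases h : j = i
      · subst h
        rw [DirectSum.decompose_of_mem_same ℳ h1, DirectSum.decompose_of_mem_same ℳ m.2]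
      · rw [DirectSum.decompose_of_mem_ne ℳ h1 (by omega),
          DirectSum.decompose_of_mem_ne ℳ m.2 h, map_zero]
    · intro a b ha hb
      rw [map_add, DirectSum.decompose_add, DirectSum.add_apply, Submodule.coe_add,
        ha, hb, DirectSum.decompose_add, DirectSum.add_apply, Submodule.coe_add, map_add]
  have hdec0 : ∀ m : M, ((DirectSum.decompose ℳ (L m)) 0 : M) = 0 := by
    refine DirectSum.Decomposition.inductionOn ℳ ?_ ?_ ?_
    · simp
    · intro j m
      have h1 : L (m : M) ∈ ℳ (j + 1) := hLmem j m m.2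
      rw [DirectSum.decompose_of_mem_ne ℳ h1 (by omega)]
    · intro a b ha hb
      rw [map_add, DirectSum.decompose_add, DirectSum.add_apply, Submodule.coe_add,
        ha, hb, add_zero]
  have hinter : ∀ i : ℕ, LinearMap.range L ⊓ ℳ (i + 1) = (ℳ i).map L := by
    intro i
    apply le_antisymm
    · rintro x hx
      obtain ⟨m, rfl⟩ := hx.1
      have hx2 : L m ∈ ℳ (i + 1) := hx.2
      have : L m = L ((DirectSum.decompose ℳ m) i : M) := by
        rw [← hdec i m, DirectSum.decompose_of_mem_same ℳ hx2]
      exact ⟨_, ((DirectSum.decompose ℳ m) i).2, this.symm⟩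
    · rintro x ⟨m, hm, rfl⟩
      exact ⟨⟨m, rfl⟩, hLmem i m hm⟩
  have hinter0 : LinearMap.range L ⊓ ℳ 0 = ⊥ := by
    rw [eq_bot_iff]
    rintro x hx
    obtain ⟨m, rfl⟩ := hx.1
    have h2 := hdec0 m
    rw [DirectSum.decompose_of_mem_same ℳ hx.2] at h2
    simpa using h2
  have hNs : ∀ i : ℕ, Module.finrank K ↥(N ⊓ ℳ i)
      = Module.finrank K ↥(LinearMap.range L ⊓ ℳ i) := by
    intro i; rw [hrange]
  have hc : ∀ i : ℕ, Module.finrank K (ℳ i)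
      = Module.finrank K ((ℳ i).map (Submodule.mkQ N))
        + Module.finrank K ↥(LinearMap.range L ⊓ ℳ i) := by
    intro i
    have h := rank_split (Submodule.mkQ N) (ℳ i)
    rw [Submodule.ker_mkQ, hNs i] at h
    exact h
  have hrr : ∀ i : ℕ, Module.finrank K (ℳ i)
      = Module.finrank K ((ℳ i).map L)
        + Module.finrank K ↥(LinearMap.range L ⊓ ℳ i) := by
    intro i
    have h := rank_split L (ℳ i)
    rw [hker] at h
    exact h
  have hcr : ∀ i : ℕ, Module.finrank K ((ℳ i).map (Submodule.mkQ N))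
      = Module.finrank K ((ℳ i).map L) := by
    intro i
    exact Nat.add_right_cancel ((hc i).symm.trans (hrr i))
  -- now compare coefficients
  ext i
  rw [add_mul, one_mul, map_add, PowerSeries.coeff_mk]
  cases i with
  | zero =>
    rw [PowerSeries.coeff_zero_X_mul, PowerSeries.coeff_mk, add_zero]
    rw [hc 0, hinter0, finrank_bot, add_zero]
  | succ i =>
    rw [PowerSeries.coeff_succ_X_mul, PowerSeries.coeff_mk, PowerSeries.coeff_mk]
    rw [hc (i + 1), hinter i, ← hcr i]
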